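/- Let B be an invertible real 2×2 matrix, a ∈ ℝ², F(x̂) = B x̂ + a, and J := det B. Let Û ⊆ ℝ² be open. Let Ξ̂ : Û → ℝ^{2×2} be continuously differentiable with Piola–Kirchhoff transform Ξ (Ξ(F(x̂)) := |J|⁻¹ B Ξ̂(x̂) Bᵀ), and let τ̂ : Û → ℝ² have Piola transform τ (τ(F(x̂)) := |J|⁻¹ B τ̂(x̂)). Then for every x̂ ∈ Û, |J| · ((Div Ξ)(F(x̂)) − τ(F(x̂))) = B · ((Div Ξ̂)(x̂) − τ̂(x̂)). -/

import Mathlib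

/-- The `i`-th partial derivative of a scalar field on `ℝ²`. -/
noncomputable def pd (i : Fin 2) (f : (Fin 2 → ℝ) → ℝ) (x : Fin 2 → ℝ) : ℝ :=
  fderiv ℝ f x (Pi.single i 1)

/-- The row-wise divergence `(Div N)_i = Σ_j ∂_j N_{ij}` of a matrix field. -/
noncomputable def DivMat (N : (Fin 2 → ℝ) → Matrix (Fin 2) (Fin 2) ℝ)
    (x : Fin 2 → ℝ) : Fin 2 → ℝ :=
  fun i => ∑ j : Fin 2, pd j (fun y => N y i j) x

lemma clm_apply_eq_sum (D : (Fin 2 → ℝ) →L[ℝ] ℝ) (v : Fin 2 → ℝ) :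
    D v = ∑ m, v m * D (Pi.single m 1) := by
  have hv : v = ∑ m : Fin 2, v m • (Pi.single m 1 : Fin 2 → ℝ) := by
    funext n
    simp [Finset.sum_apply, Pi.single_apply]
  nth_rewrite 1 [hv]
  rw [map_sum]
  simp [smul_eq_mul]

lemma alg_lemma (B C : Matrix (Fin 2) (Fin 2) ℝ) (hCB : C * B = 1)
    (P : Fin 2 → Fin 2 → Fin 2 → ℝ) (i : Fin 2) :
    ∑ j : Fin 2, ∑ l : Fin 2, B j l * ∑ k : Fin 2, B i k * ∑ m : Fin 2, C m j * P k l m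
      = ∑ k : Fin 2, B i k * ∑ l : Fin 2, P k l l := by
  have hδ : ∀ m l : Fin 2, ∑ j : Fin 2, C m j * B j l = if m = l then 1 else 0 := by
    intro m l
    have := congrFun (congrFun hCB m) l
    simpa [Matrix.mul_apply, Matrix.one_apply] using this
  have h00 := hδ 0 0
  have h01 := hδ 0 1
  have h10 := hδ 1 0
  have h11 := hδ 1 1
  simp only [Fin.sum_univ_two, if_true, if_pos, if_neg, Fin.zero_eq_one_iff,
    Fin.one_eq_zero_iff, Nat.succ_ne_self, ne_eq, reduceIte] at h00 h01 h10 h11 ⊢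
  linear_combination (B i 0 * P 0 0 0 + B i 1 * P 1 0 0) * h00
    + (B i 0 * P 0 1 0 + B i 1 * P 1 1 0) * h01
    + (B i 0 * P 0 0 1 + B i 1 * P 1 0 1) * h10
    + (B i 0 * P 0 1 1 + B i 1 * P 1 1 1) * h11

/-- For the Piola–Kirchhoff transform `Ξ` of `Ξ̂` and the Piola transform
`τ` of `τ̂`, one has `|J| ((Div Ξ)(F x̂) − τ(F x̂)) = B ((Div Ξ̂)(x̂) − τ̂(x̂))`
(Lemma 9, first transformation relation, smooth case).
Here `Xihat` plays the role of `Ξ̂`, `tauhat` of `τ̂`, `Uhat` of `Û`, `xhat` of `x̂`. -/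
theorem stmt8
    (B : Matrix (Fin 2) (Fin 2) ℝ) (hB : IsUnit B.det) (a : Fin 2 → ℝ)
    (F : (Fin 2 → ℝ) → (Fin 2 → ℝ)) (hF : ∀ xhat, F xhat = B.mulVec xhat + a)
    (Uhat : Set (Fin 2 → ℝ)) (hUhat : IsOpen Uhat)
    (Xihat Ξ : (Fin 2 → ℝ) → Matrix (Fin 2) (Fin 2) ℝ)
    (hsmooth : ∀ i j : Fin 2, ContDiffOn ℝ 1 (fun x => Xihat x i j) Uhat)
    (hXi : ∀ xhat ∈ Uhat, Ξ (F xhat) = |B.det|⁻¹ • (B * Xihat xhat * B.transpose))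
    (tauhat τ : (Fin 2 → ℝ) → (Fin 2 → ℝ))
    (htau : ∀ xhat ∈ Uhat, τ (F xhat) = |B.det|⁻¹ • B.mulVec (tauhat xhat)) :
    ∀ xhat ∈ Uhat,
      |B.det| • (DivMat Ξ (F xhat) - τ (F xhat))
        = B.mulVec (DivMat Xihat xhat - tauhat xhat) := by
  intro xhat hx
  have hdet : B.det ≠ 0 := isUnit_iff_ne_zero.mp hB
  have habs : |B.det| ≠ 0 := abs_ne_zero.mpr hdet
  have hCB : B⁻¹ * B = 1 := B.nonsing_inv_mul hB
  have hBC : B * B⁻¹ = 1 := B.mul_nonsing_inv hB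
  set C := B⁻¹ with hCdef
  set L : (Fin 2 → ℝ) →L[ℝ] (Fin 2 → ℝ) :=
    LinearMap.toContinuousLinearMap (Matrix.mulVecLin C) with hLdef
  have hLapp : ∀ v, L v = C.mulVec v := fun v => rfl
  set G : (Fin 2 → ℝ) → (Fin 2 → ℝ) := fun y => L (y - a) with hGdef
  have hGF : ∀ x, G (F x) = x := by
    intro x
    simp only [hGdef, hF, hLapp, add_sub_cancel_right, Matrix.mulVec_mulVec, hCB,
      Matrix.one_mulVec]
  have hFG : ∀ y, F (G y) = y := by
    intro y
    simp only [hGdef, hF, hLapp, Matrix.mulVec_mulVec, hBC, Matrix.one_mulVec,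
      sub_add_cancel]
  have hGderiv : ∀ y, HasFDerivAt G L y := by
    intro y
    have h1 : HasFDerivAt (fun y : Fin 2 → ℝ => y - a)
        (ContinuousLinearMap.id ℝ (Fin 2 → ℝ)) y := (hasFDerivAt_id y).sub_const a
    have h2 := L.hasFDerivAt.comp y h1
    rw [ContinuousLinearMap.comp_id] at h2
    exact h2
  have hSopen : IsOpen (G ⁻¹' Uhat) :=
    hUhat.preimage (L.continuous.comp (continuous_id.sub continuous_const))
  have hFS : F xhat ∈ G ⁻¹' Uhat := by
    show G (F xhat) ∈ Uhat
    rw [hGF]; exact hx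
  set D : Fin 2 → Fin 2 → ((Fin 2 → ℝ) →L[ℝ] ℝ) :=
    fun k l => fderiv ℝ (fun x => Xihat x k l) xhat with hDdef
  have hcomp : ∀ k l, HasFDerivAt (fun y => Xihat (G y) k l) ((D k l).comp L) (F xhat) := by
    intro k l
    have hd : HasFDerivAt (fun x => Xihat x k l) (D k l) xhat :=
      (((hsmooth k l).contDiffAt (hUhat.mem_nhds hx)).differentiableAt one_ne_zero).hasFDerivAt
    rw [← hGF xhat] at hd
    exact hd.comp (F xhat) (hGderiv (F xhat))
  -- key per-component derivative computation
  have key : ∀ i j : Fin 2, pd j (fun y => Ξ y i j) (F xhat)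
      = |B.det|⁻¹ * ∑ l, B j l * ∑ k, B i k * ∑ m, C m j * pd m (fun x => Xihat x k l) xhat := by
    intro i j
    have hgd : HasFDerivAt
        (fun y => |B.det|⁻¹ * ∑ l, (∑ k, B i k * Xihat (G y) k l) * B j l)
        (|B.det|⁻¹ • ∑ l, B j l • ∑ k, B i k • ((D k l).comp L)) (F xhat) := by
      exact (HasFDerivAt.fun_sum (fun l _ =>
        (HasFDerivAt.fun_sum (fun k _ => (hcomp k l).const_mul (B i k))).mul_const
          (B j l))).const_mul _
    have hev : (fun y => Ξ y i j) =ᶠ[nhds (F xhat)]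
        (fun y => |B.det|⁻¹ * ∑ l, (∑ k, B i k * Xihat (G y) k l) * B j l) := by
      filter_upwards [hSopen.mem_nhds hFS] with y hy
      have h1 := hXi (G y) hy
      rw [hFG] at h1
      rw [h1]
      simp [Matrix.mul_apply, Matrix.smul_apply, Matrix.transpose_apply, smul_eq_mul]
    unfold pd
    rw [hev.fderiv_eq, hgd.fderiv]
    have hCv : ∀ m : Fin 2, L (Pi.single j 1) m = C m j := by
      intro m
      simp [hLapp, Matrix.mulVec, dotProduct, Pi.single_apply]
    have hval : ∀ k l : Fin 2, (D k l) (L (Pi.single j 1))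
        = ∑ m, C m j * pd m (fun x => Xihat x k l) xhat := by
      intro k l
      rw [clm_apply_eq_sum]
      refine Finset.sum_congr rfl fun m _ => ?_
      rw [hCv m]
      rfl
    simp only [ContinuousLinearMap.smul_apply, ContinuousLinearMap.coe_sum',
      Finset.sum_apply, ContinuousLinearMap.coe_smul', Pi.smul_apply,
      ContinuousLinearMap.comp_apply, smul_eq_mul, hval]
    rfl
  -- divergence transformation
  have hdiv : ∀ i : Fin 2, DivMat Ξ (F xhat) i
      = |B.det|⁻¹ * (B.mulVec (DivMat Xihat xhat)) i := by
    intro i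
    unfold DivMat
    calc ∑ j : Fin 2, pd j (fun y => Ξ y i j) (F xhat)
        = ∑ j : Fin 2, |B.det|⁻¹ * ∑ l, B j l * ∑ k, B i k *
            ∑ m, C m j * pd m (fun x => Xihat x k l) xhat := by
          exact Finset.sum_congr rfl (fun j _ => key i j)
      _ = |B.det|⁻¹ * ∑ j : Fin 2, ∑ l, B j l * ∑ k, B i k *
            ∑ m, C m j * pd m (fun x => Xihat x k l) xhat := by
          rw [Finset.mul_sum]
      _ = |B.det|⁻¹ * ∑ k, B i k * ∑ l, pd l (fun x => Xihat x k l) xhat := by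
          rw [alg_lemma B C hCB (fun k l m => pd m (fun x => Xihat x k l) xhat) i]
      _ = |B.det|⁻¹ * (B.mulVec (DivMat Xihat xhat)) i := by
          simp [Matrix.mulVec, dotProduct, DivMat]
  funext i
  have ht := htau xhat hx
  simp only [Pi.smul_apply, Pi.sub_apply, smul_eq_mul, hdiv i, ht,
    Matrix.mulVec_sub, Pi.smul_apply, smul_eq_mul]
  field_simp
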